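/- In the presented group Π = ⟨a, b ∣ [a³, b] = 1, ab² = ba²⟩, the images of both a³ and b³ lie in the center of Π. -/

import Mathlib

open scoped commutatorElement

/-- Relators of `Π = ⟨a, b ∣ [a³, b] = 1, ab² = ba²⟩`, with `a = 0`, `b = 1`. -/
def relsC3C2 : Set (FreeGroup (Fin 2)) :=
  {⁅(FreeGroup.of 0 : FreeGroup (Fin 2)) ^ 3, FreeGroup.of 1⁆,
   FreeGroup.of 0 * FreeGroup.of 1 ^ 2 * (FreeGroup.of 1 * FreeGroup.of 0 ^ 2)⁻¹}

private lemma rel_mk_one {r : FreeGroup (Fin 2)} (h : r ∈ relsC3C2) :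
    PresentedGroup.mk relsC3C2 r = 1 :=
  (QuotientGroup.eq_one_iff r).mpr (Subgroup.subset_normalClosure h)

private lemma key1 :
    (PresentedGroup.of 0 : PresentedGroup relsC3C2) ^ 3 * PresentedGroup.of 1 =
      PresentedGroup.of 1 * (PresentedGroup.of 0 : PresentedGroup relsC3C2) ^ 3 := by
  have h := rel_mk_one (Set.mem_insert _ _)
  rw [map_commutatorElement, commutatorElement_eq_one_iff_mul_comm] at h
  simpa [PresentedGroup.of] using h

private lemma key2 :
    (PresentedGroup.of 0 : PresentedGroup relsC3C2) * PresentedGroup.of 1 ^ 2 =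
      PresentedGroup.of 1 * (PresentedGroup.of 0 : PresentedGroup relsC3C2) ^ 2 := by
  have h := rel_mk_one (Set.mem_insert_of_mem _ rfl)
  simp only [map_mul, map_inv, map_pow] at h
  exact mul_inv_eq_one.mp h

private lemma central_of_gen_comm (z : PresentedGroup relsC3C2)
    (h : ∀ i : Fin 2, PresentedGroup.of i * z = z * PresentedGroup.of i) :
    z ∈ Subgroup.center (PresentedGroup relsC3C2) := by
  rw [Subgroup.mem_center_iff]
  intro g
  have hg : g ∈ Subgroup.closure (Set.range (PresentedGroup.of : Fin 2 → _)) := by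
    rw [PresentedGroup.closure_range_of]; trivial
  induction hg using Subgroup.closure_induction with
  | mem x hx => obtain ⟨i, rfl⟩ := hx; exact h i
  | one => simp
  | mul x y _ _ hx hy => rw [mul_assoc, hy, ← mul_assoc, hx, mul_assoc]
  | inv x _ hx => exact (Commute.inv_left hx : _)

/-- In `Π = ⟨a, b ∣ [a³, b] = 1, ab² = ba²⟩`, both `a³` and `b³` are central. -/
theorem stmt_16 :
    (PresentedGroup.of 0 : PresentedGroup relsC3C2) ^ 3 ∈
        Subgroup.center (PresentedGroup relsC3C2) ∧
    (PresentedGroup.of 1 : PresentedGroup relsC3C2) ^ 3 ∈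
        Subgroup.center (PresentedGroup relsC3C2) := by
  set a : PresentedGroup relsC3C2 := PresentedGroup.of 0 with ha
  set b : PresentedGroup relsC3C2 := PresentedGroup.of 1 with hb
  have h1 : a ^ 3 * b = b * a ^ 3 := key1
  have h2 : a * b ^ 2 = b * a ^ 2 := key2
  -- b² a = a² b
  have h3 : b ^ 2 * a = a ^ 2 * b := by
    have hb2 : b ^ 2 = a⁻¹ * (b * a ^ 2) := by
      rw [← h2]; group
    calc b ^ 2 * a = a⁻¹ * (b * a ^ 2) * a := by rw [hb2]
    _ = a⁻¹ * (b * a ^ 3) := by group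
    _ = a⁻¹ * (a ^ 3 * b) := by rw [← h1]
    _ = a ^ 2 * b := by group
  -- b³ a = a b³
  have h4 : b ^ 3 * a = a * b ^ 3 := by
    calc b ^ 3 * a = b * (b ^ 2 * a) := by group
    _ = b * a ^ 2 * b := by rw [h3]; group
    _ = (a * b ^ 2) * b := by rw [h2]
    _ = a * b ^ 3 := by group
  refine ⟨central_of_gen_comm _ fun i => ?_, central_of_gen_comm _ fun i => ?_⟩
  · fin_cases i
    · show a * a ^ 3 = a ^ 3 * a; group
    · show b * a ^ 3 = a ^ 3 * b; rw [h1]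
  · fin_cases i
    · show a * b ^ 3 = b ^ 3 * a; rw [h4]
    · show b * b ^ 3 = b ^ 3 * b; group
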